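/- Let J be the n×n nilpotent Jordan block over a field K of characteristic zero. Then the linear span of the set {exp(xJ) : x ∈ K} equals the K-vector space spanned by E, J, J², …, J^{n−1} (where E is the identity matrix). -/
import Mathlib


/-- The nilpotent Jordan block of size `n`. -/
def jordanBlock (K : Type*) [Field K] (n : ℕ) : Matrix (Fin n) (Fin n) K :=
  fun i j => if (j : ℕ) = (i : ℕ) + 1 then 1 else 0

/-- The exponential `exp (x J)` of a scalar multiple of the Jordan block, as a finite sum
`∑_{k < n} x^k / k! • J^k` (the series terminates since `J^n = 0`). -/
noncomputable def expJordan (K : Type*) [Field K] (n : ℕ) (x : K) : Matrix (Fin n) (Fin n) K :=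
  ∑ k ∈ Finset.range n, (x ^ k / (Nat.factorial k : K)) • (jordanBlock K n) ^ k

/-- The coefficient matrix `M i k = i^k / k!`. -/
noncomputable def coeffM (K : Type*) [Field K] (n : ℕ) : Matrix (Fin n) (Fin n) K :=
  fun i k => ((i : K) ^ (k : ℕ) / (Nat.factorial (k : ℕ) : K))

lemma expJordan_nat (K : Type*) [Field K] (n : ℕ) (i : Fin n) :
    expJordan K n (i : K) = ∑ j : Fin n, coeffM K n i j • (jordanBlock K n) ^ (j : ℕ) := by
  rw [expJordan, Finset.sum_range fun j => ((i : K) ^ j / (Nat.factorial j : K)) •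
    (jordanBlock K n) ^ j]
  rfl

lemma coeffM_det_ne_zero (K : Type*) [Field K] [CharZero K] (n : ℕ) :
    (coeffM K n).det ≠ 0 := by
  have : coeffM K n = (Matrix.vandermonde fun i : Fin n => (i : K)) *
      Matrix.diagonal (fun k : Fin n => (1 : K) / (Nat.factorial (k : ℕ) : K)) := by
    ext i k
    simp [coeffM, Matrix.mul_diagonal, Matrix.vandermonde, div_eq_mul_inv]
  rw [this, Matrix.det_mul, Matrix.det_diagonal]
  apply mul_ne_zero
  · rw [Matrix.det_vandermonde_ne_zero_iff]
    intro a b hab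
    exact Fin.ext (Nat.cast_injective hab)
  · apply Finset.prod_ne_zero_iff.mpr
    intro k _
    simp [Nat.factorial_ne_zero k.1, Nat.cast_ne_zero.mpr (Nat.factorial_ne_zero k.1)]

lemma pow_eq_sum_exp (K : Type*) [Field K] [CharZero K] (n : ℕ) (k : Fin n) :
    (jordanBlock K n) ^ (k : ℕ) =
      ∑ i : Fin n, (coeffM K n)⁻¹ k i • expJordan K n (i : K) := by
  have hinv : (coeffM K n)⁻¹ * coeffM K n = 1 :=
    Matrix.nonsing_inv_mul _ ((coeffM_det_ne_zero K n).isUnit)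
  calc (jordanBlock K n) ^ (k : ℕ)
      = ∑ j : Fin n, ((1 : Matrix (Fin n) (Fin n) K) k j) • (jordanBlock K n) ^ (j : ℕ) := by
        simp [Matrix.one_apply]
    _ = ∑ j : Fin n, (((coeffM K n)⁻¹ * coeffM K n) k j) • (jordanBlock K n) ^ (j : ℕ) := by
        rw [hinv]
    _ = ∑ i : Fin n, (coeffM K n)⁻¹ k i • expJordan K n (i : K) := by
        simp only [expJordan_nat, Matrix.mul_apply, Finset.smul_sum, Finset.sum_smul, smul_smul]
        rw [Finset.sum_comm]

/-- over a field of characteristic zero, the linear span of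
`{exp(xJ) : x ∈ K}` equals the span of `E, J, J², …, J^{n-1}`. -/
theorem span_exp_eq_span_powers (K : Type*) [Field K] [CharZero K] (n : ℕ) :
    Submodule.span K (Set.range (expJordan K n)) =
      Submodule.span K (Set.range fun k : Fin n => (jordanBlock K n) ^ (k : ℕ)) := by
  apply le_antisymm
  · rw [Submodule.span_le]
    rintro _ ⟨x, rfl⟩
    rw [expJordan]
    apply Submodule.sum_mem
    intro k hk
    exact Submodule.smul_mem _ _
      (Submodule.subset_span ⟨⟨k, Finset.mem_range.mp hk⟩, rfl⟩)
  · rw [Submodule.span_le]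
    rintro _ ⟨k, rfl⟩
    simp only
    rw [pow_eq_sum_exp]
    apply Submodule.sum_mem
    intro i _
    exact Submodule.smul_mem _ _ (Submodule.subset_span ⟨(i : K), rfl⟩)
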